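/- Let G be a finite group and H a normal subgroup of G. Then cp(G) ≤ cp(G/H). -/
import Mathlib


theorem commProb_le_commProb_quotient (G : Type*) [Group G] [Finite G]
    (H : Subgroup G) [H.Normal] :
    commProb G ≤ commProb (G ⧸ H) := by
  have key : Nat.card { p : G × G // Commute p.1 p.2 } ≤
      Nat.card { p : (G ⧸ H) × (G ⧸ H) // Commute p.1 p.2 } * (Nat.card H * Nat.card H) := by
    rw [← Nat.card_prod, ← Nat.card_prod]
    apply Nat.card_le_card_of_injective
      (f := fun p : { p : G × G // Commute p.1 p.2 } =>
        ((⟨((p.1.1 : G ⧸ H), (p.1.2 : G ⧸ H)), p.2.map (QuotientGroup.mk' H)⟩ :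
            { p : (G ⧸ H) × (G ⧸ H) // Commute p.1 p.2 }),
          ((⟨p.1.1 * ((p.1.1 : G ⧸ H).out)⁻¹, by
              rw [← QuotientGroup.eq_one_iff, QuotientGroup.mk_mul, QuotientGroup.mk_inv,
                QuotientGroup.out_eq', mul_inv_cancel]⟩ : H),
           (⟨p.1.2 * ((p.1.2 : G ⧸ H).out)⁻¹, by
              rw [← QuotientGroup.eq_one_iff, QuotientGroup.mk_mul, QuotientGroup.mk_inv,
                QuotientGroup.out_eq', mul_inv_cancel]⟩ : H))))
    rintro ⟨⟨x, y⟩, hxy⟩ ⟨⟨x', y'⟩, hxy'⟩ h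
    simp only [Prod.ext_iff, Subtype.ext_iff, Subtype.mk_eq_mk] at h
    obtain ⟨⟨h1, h2⟩, h3, h4⟩ := h
    have hx : x = x' := by rw [h1] at h3; exact mul_right_cancel h3
    have hy : y = y' := by rw [h2] at h4; exact mul_right_cancel h4
    simp [hx, hy]
  have hQ : (0:ℚ) < (Nat.card (G ⧸ H) : ℚ) := Nat.cast_pos.mpr Nat.card_pos
  have hH : (0:ℚ) < (Nat.card H : ℚ) := Nat.cast_pos.mpr Nat.card_pos
  have hcard : (Nat.card G : ℚ) = Nat.card (G ⧸ H) * Nat.card H := by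
    rw [← Nat.cast_mul, Nat.cast_inj]
    exact Subgroup.card_eq_card_quotient_mul_card_subgroup H
  rw [commProb_def, commProb_def, hcard, div_le_div_iff₀ (by positivity) (by positivity)]
  calc (Nat.card { p : G × G // Commute p.1 p.2 } : ℚ) * (Nat.card (G ⧸ H) : ℚ) ^ 2
      ≤ (Nat.card { p : (G ⧸ H) × (G ⧸ H) // Commute p.1 p.2 } * (Nat.card H * Nat.card H) : ℚ) *
        (Nat.card (G ⧸ H) : ℚ) ^ 2 := by
        apply mul_le_mul_of_nonneg_right _ (by positivity)
        exact_mod_cast Nat.cast_le.mpr key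
    _ = (Nat.card { p : (G ⧸ H) × (G ⧸ H) // Commute p.1 p.2 } : ℚ) *
        ((Nat.card (G ⧸ H) : ℚ) * (Nat.card H : ℚ)) ^ 2 := by ring
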